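/- Let d ≥ 1, c > 0, and let f : [−1/2, 1/2]^d → ℝ be continuous with f(0) = 0 and with |f(x_1, …, x_d)| ≥ c whenever x_j = 1/2 for some 1 ≤ j ≤ d. Then for every activation function σ : ℝ → ℝ, every depth L ≥ 1, and every function φ : ℝ^d → ℝ of the form φ = 𝓛_L ∘ σ ∘ 𝓛_{L−1} ∘ σ ∘ ⋯ ∘ σ ∘ 𝓛_1 ∘ σ ∘ 𝓛_0, where each 𝓛_i(y) = W_i y + b_i is affine and every hidden layer has dimension d−1 (i.e., the network has width d−1), there exists x ∈ [−1/2, 1/2]^d with |f(x) − φ(x)| ≥ c/2. In particular, σ networks with width d−1 and fixed depth L cannot approximate f with arbitrary accuracy. -/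

import Mathlib

/-- The elementary universal activation function (EUAF). -/
noncomputable def euaf (x : ℝ) : ℝ :=
  if 0 ≤ x then |x - 2 * (⌊(x + 1) / 2⌋ : ℝ)| else x / (|x| + 1)

/-- Iterated hidden layers: `hiddenLayers σ N W b i` applies `i` layers of the form
`y ↦ σ (W_k y + b_k)` (componentwise `σ`). -/
def hiddenLayers (σ : ℝ → ℝ) (N : ℕ) (W : ℕ → Matrix (Fin N) (Fin N) ℝ)
    (b : ℕ → Fin N → ℝ) : ℕ → (Fin N → ℝ) → (Fin N → ℝ)
  | 0 => id
  | i + 1 => fun y k => σ ((W i).mulVec (hiddenLayers σ N W b i y) k + b i k)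

/-- The function computed by a `σ` network with input dimension `d`, width `N` and
depth `L`: `φ = 𝓛_L ∘ σ ∘ 𝓛_{L-1} ∘ σ ∘ ⋯ ∘ σ ∘ 𝓛_1 ∘ σ ∘ 𝓛_0`. -/
def netFun (σ : ℝ → ℝ) (d N L : ℕ) (W0 : Matrix (Fin N) (Fin d) ℝ) (b0 : Fin N → ℝ)
    (W : ℕ → Matrix (Fin N) (Fin N) ℝ) (b : ℕ → Fin N → ℝ)
    (wL : Fin N → ℝ) (bL : ℝ) : (Fin d → ℝ) → ℝ :=
  fun x =>
    (∑ k, wL k * hiddenLayers σ N W b (L - 1) (fun k => σ (W0.mulVec x k + b0 k)) k) + bL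

/-- `φ` is generated by a `σ` network with input dimension `d`, width `N`, depth `L`. -/
def IsSigmaNetwork (σ : ℝ → ℝ) (d N L : ℕ) (φ : (Fin d → ℝ) → ℝ) : Prop :=
  ∃ W0 b0 W b wL bL, φ = netFun σ d N L W0 b0 W b wL bL

/-- `φ : ℝ → ℝ` is generated by an EUAF network (input dimension 1) with width `N`
and depth `L`. -/
def IsEUAFNetwork1 (N L : ℕ) (φ : ℝ → ℝ) : Prop :=
  ∃ ψ : (Fin 1 → ℝ) → ℝ, IsSigmaNetwork euaf 1 N L ψ ∧ ∀ x, φ x = ψ (fun _ => x)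

/-- width lower bound: for any activation `σ` and any depth `L ≥ 1`, a
`σ` network of width `d-1` makes an error of at least `c/2` somewhere on the cube when
approximating a continuous function vanishing at the origin and bounded below by `c`
whenever some coordinate equals `1/2`; hence such networks cannot approximate `f` with
arbitrary accuracy. -/
theorem width_lower_bound (d : ℕ) (hd : 1 ≤ d) (c : ℝ) (hc : 0 < c)
    (f : (Fin d → ℝ) → ℝ)
    (hfcont : ContinuousOn f
      (Set.Icc (fun _ => -(1 / 2) : Fin d → ℝ) (fun _ => 1 / 2)))
    (hf0 : f 0 = 0)
    (hfc : ∀ x ∈ Set.Icc (fun _ => -(1 / 2) : Fin d → ℝ) (fun _ => 1 / 2),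
      (∃ j, x j = 1 / 2) → c ≤ |f x|) :
    ∀ (σ : ℝ → ℝ) (L : ℕ), 1 ≤ L →
      ∀ φ : (Fin d → ℝ) → ℝ, IsSigmaNetwork σ d (d - 1) L φ →
        ∃ x ∈ Set.Icc (fun _ => -(1 / 2) : Fin d → ℝ) (fun _ => 1 / 2),
          c / 2 ≤ |f x - φ x| := by
  intro σ L hL φ hφ
  obtain ⟨W0, b0, W, b, wL, bL, rfl⟩ := hφ
  -- W0 : matrix (d-1) × d, its mulVec is not injective
  have hnotinj : ¬ Function.Injective (Matrix.mulVecLin W0) := by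
    intro h
    have h1 := LinearMap.finrank_le_finrank_of_injective h
    simp [Module.finrank_fin_fun] at h1
    omega
  obtain ⟨a, a', hae, hane⟩ := Function.not_injective_iff.mp hnotinj
  set v : Fin d → ℝ := a - a' with hv
  have hvne : v ≠ 0 := sub_ne_zero.mpr hane
  have hmv : W0.mulVec v = 0 := by
    have : Matrix.mulVecLin W0 v = 0 := by
      simp [hv, map_sub, hae]
    simpa using this
  have hdpos : 0 < d := hd
  haveI : Nonempty (Fin d) := ⟨⟨0, hdpos⟩⟩
  obtain ⟨j, _, hj⟩ := Finset.exists_max_image Finset.univ (fun i => |v i|)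
    Finset.univ_nonempty
  have hjmax : ∀ i, |v i| ≤ |v j| := fun i => hj i (Finset.mem_univ i)
  have hjpos : 0 < |v j| := by
    obtain ⟨i, hi⟩ := Function.ne_iff.mp hvne
    have : 0 < |v i| := abs_pos.mpr hi
    exact lt_of_lt_of_le this (hjmax i)
  set t : ℝ := (if 0 ≤ v j then 1 else -1) / (2 * |v j|) with ht
  set u : Fin d → ℝ := t • v with hu
  have huj : u j = 1 / 2 := by
    simp only [hu, Pi.smul_apply, smul_eq_mul, ht]
    rcases le_or_gt 0 (v j) with h | h
    · rw [if_pos h, abs_of_nonneg h]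
      have hvp : v j ≠ 0 := by
        intro h0; rw [h0] at hjpos; simp at hjpos
      field_simp
    · rw [if_neg (not_le.mpr h), abs_of_neg h]
      field_simp
      exact div_self h.ne
  have habs : ∀ i, |u i| ≤ 1 / 2 := by
    intro i
    simp only [hu, Pi.smul_apply, smul_eq_mul, abs_mul, ht, abs_div]
    have h1 : |(if 0 ≤ v j then (1:ℝ) else -1)| = 1 := by
      split <;> norm_num
    rw [h1]
    simp only [abs_abs, abs_of_nonneg (by norm_num : (0:ℝ) ≤ 2)]
    rw [div_mul_eq_mul_div, one_mul, div_le_div_iff₀ (by positivity) (by norm_num)]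
    nlinarith [hjmax i, hjpos]
  have hmem : ∀ (x : Fin d → ℝ), (∀ i, |x i| ≤ 1 / 2) →
      x ∈ Set.Icc (fun _ => -(1 / 2) : Fin d → ℝ) (fun _ => 1 / 2) := by
    intro x hx
    constructor <;> intro i <;> have := abs_le.mp (hx i)
    · exact this.1
    · exact this.2
  have humem := hmem u habs
  have h0mem := hmem 0 (by intro i; norm_num)
  have hmu : W0.mulVec u = 0 := by
    simp [hu, Matrix.mulVec_smul, hmv]
  have hphieq : netFun σ d (d-1) L W0 b0 W b wL bL u
      = netFun σ d (d-1) L W0 b0 W b wL bL 0 := by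
    simp [netFun, hmu, Matrix.mulVec_zero]
  have hfu : c ≤ |f u| := hfc u humem ⟨j, huj⟩
  set p := netFun σ d (d-1) L W0 b0 W b wL bL 0 with hp
  rcases le_or_gt (c / 2) |f u - netFun σ d (d-1) L W0 b0 W b wL bL u| with h | h
  · exact ⟨u, humem, h⟩
  · refine ⟨0, h0mem, ?_⟩
    rw [hf0]
    rw [hphieq] at h
    have h2 : |f u| ≤ |f u - p| + |p| := by
      have := abs_sub_abs_le_abs_sub (f u) p
      have h3 := abs_add_le (f u - p) p
      simp at h3
      linarith [abs_add_le (f u - p) p]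
    have : c / 2 ≤ |p| := by linarith
    calc c / 2 ≤ |p| := this
    _ = |0 - p| := by rw [zero_sub, abs_neg]
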